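/- The Gaussian binomial coefficient factorizes as $\binom{m}{k}_q = \prod_d \Phi_d(q)$, where the product runs over all positive integers $d \leq m$ such that $\lfloor k/d \rfloor + \lfloor (m-k)/d \rfloor < \lfloor m/d \rfloor$, and $\Phi_d$ is the $d$-th cyclotomic polynomial. -/
import Mathlib


open Polynomial Finset

/-- The `q`-integer `[n] = 1 + q + ⋯ + q^(n-1)` as a polynomial in `ℤ[q]`. -/
noncomputable def qint (n : ℕ) : Polynomial ℤ := ∑ i ∈ Finset.range n, Polynomial.X ^ i

/-- The Gaussian binomial coefficient `[n choose k]_q` in `ℤ[q]`, via the `q`-Pascal rule. -/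
noncomputable def qbinom : ℕ → ℕ → Polynomial ℤ
  | _, 0 => 1
  | 0, _ + 1 => 0
  | n + 1, k + 1 => qbinom n k + Polynomial.X ^ (k + 1) * qbinom n (k + 1)

noncomputable def qfac (n : ℕ) : Polynomial ℤ := ∏ i ∈ Finset.Icc 1 n, qint i

lemma qfac_zero : qfac 0 = 1 := by simp [qfac]

lemma qfac_succ (n : ℕ) : qfac (n + 1) = qfac n * qint (n + 1) := by
  unfold qfac
  rw [Finset.prod_Icc_succ_top (by omega)]

lemma qbinom_eq_zero : ∀ {n k : ℕ}, n < k → qbinom n k = 0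
  | 0, _ + 1, _ => rfl
  | n + 1, k + 1, h => by
      rw [qbinom, qbinom_eq_zero (show n < k by omega),
        qbinom_eq_zero (show n < k + 1 by omega)]
      ring

lemma qint_pascal {k m : ℕ} (h : k ≤ m) :
    qint (m + 1) = qint (k + 1) + X ^ (k + 1) * qint (m - k) := by
  unfold qint
  rw [Finset.mul_sum]
  have hm : m + 1 = (k + 1) + (m - k) := by omega
  rw [hm, Finset.sum_range_add]
  congr 1
  exact Finset.sum_congr rfl fun i _ => (pow_add X (k + 1) i)

lemma qbinom_mul_qfac : ∀ m k, k ≤ m → qbinom m k * (qfac k * qfac (m - k)) = qfac m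
  | m, 0, _ => by simp [qbinom, qfac_zero]
  | 0, k + 1, h => by omega
  | m + 1, k + 1, h => by
    rcases eq_or_lt_of_le h with he | hlt
    · obtain rfl : k = m := by omega
      rw [qbinom, qbinom_eq_zero (Nat.lt_succ_self k)]
      have h1 := qbinom_mul_qfac k k le_rfl
      simp only [Nat.sub_self, qfac_zero, mul_one] at h1 ⊢
      rw [mul_zero, add_zero, qfac_succ]
      linear_combination qint (k + 1) * h1
    · have hk1 : k + 1 ≤ m := by omega
      have h1 := qbinom_mul_qfac m k (by omega)
      have h2 := qbinom_mul_qfac m (k + 1) hk1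
      rw [qbinom]
      have e1 : m + 1 - (k + 1) = m - k := by omega
      have e2 : m - k = (m - (k + 1)) + 1 := by omega
      rw [e1, qfac_succ k, e2, qfac_succ (m - (k + 1)), qfac_succ m,
        qint_pascal (show k ≤ m by omega)]
      rw [e2] at h1
      rw [qfac_succ (m - (k + 1))] at h1
      rw [qfac_succ k] at h2
      rw [← e2] at h1 ⊢
      linear_combination qint (k + 1) * h1 + X ^ (k + 1) * qint (m - k) * h2

lemma qint_eq_prod (n : ℕ) (hn : 0 < n) :
    qint n = ∏ d ∈ n.divisors.erase 1, cyclotomic d ℤ := by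
  have hx : (X - 1 : Polynomial ℤ) ≠ 0 := by
    simpa using Polynomial.X_sub_C_ne_zero (1 : ℤ)
  apply mul_right_cancel₀ hx
  have h1 : qint n * (X - 1 : Polynomial ℤ) = X ^ n - 1 := geom_sum_mul X n
  have h2 : ∏ d ∈ n.divisors, cyclotomic d ℤ = X ^ n - 1 :=
    prod_cyclotomic_eq_X_pow_sub_one hn ℤ
  have h3 : (1 : ℕ) ∈ n.divisors := Nat.one_mem_divisors.mpr hn.ne'
  have h4 : (X - 1 : Polynomial ℤ) * ∏ d ∈ n.divisors.erase 1, cyclotomic d ℤ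
      = ∏ d ∈ n.divisors, cyclotomic d ℤ := by
    simpa [cyclotomic_one] using Finset.mul_prod_erase n.divisors (fun d => cyclotomic d ℤ) h3
  rw [h1, ← h2, ← h4]
  ring

lemma qfac_eq_prod (N : ℕ) : ∀ n, n ≤ N →
    qfac n = ∏ d ∈ Finset.Icc 2 N, cyclotomic d ℤ ^ (n / d)
  | 0, _ => by
    rw [qfac_zero]
    refine (Finset.prod_eq_one fun d hd => ?_).symm
    have : 2 ≤ d := (Finset.mem_Icc.mp hd).1
    rw [Nat.zero_div, pow_zero]
  | n + 1, h => by
    rw [qfac_succ, qfac_eq_prod N n (by omega), qint_eq_prod (n + 1) (Nat.succ_pos n)]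
    have hset : (n + 1).divisors.erase 1 = (Finset.Icc 2 N).filter (· ∣ (n + 1)) := by
      ext d
      simp only [Finset.mem_erase, Nat.mem_divisors, Finset.mem_filter, Finset.mem_Icc]
      constructor
      · rintro ⟨hd1, hdvd, -⟩
        have hd0 : d ≠ 0 := by rintro rfl; exact (Nat.succ_ne_zero n) (Nat.eq_zero_of_zero_dvd hdvd)
        have hle : d ≤ n + 1 := Nat.le_of_dvd (Nat.succ_pos n) hdvd
        exact ⟨⟨by omega, by omega⟩, hdvd⟩
      · rintro ⟨⟨h2d, -⟩, hdvd⟩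
        exact ⟨by omega, hdvd, Nat.succ_ne_zero n⟩
    rw [hset, Finset.prod_filter, ← Finset.prod_mul_distrib]
    refine Finset.prod_congr rfl fun d hd => ?_
    rw [Nat.succ_div, pow_add]
    by_cases hdvd : d ∣ (n + 1)
    · rw [if_pos hdvd, if_pos hdvd, pow_one]
    · rw [if_neg hdvd, if_neg hdvd, pow_zero]

theorem stmt_10 (m k : ℕ) (hk : k ≤ m) :
    qbinom m k
      = ∏ d ∈ (Finset.Icc 1 m).filter (fun d => k / d + (m - k) / d < m / d),
          Polynomial.cyclotomic d ℤ := by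
  have hP : (∏ d ∈ Finset.Icc 2 m, cyclotomic d ℤ ^ (k / d + (m - k) / d)) ≠ 0 := by
    refine Finset.prod_ne_zero_iff.mpr fun d hd => ?_
    exact pow_ne_zero _ (cyclotomic_ne_zero d ℤ)
  apply mul_right_cancel₀ hP
  have key := qbinom_mul_qfac m k hk
  rw [qfac_eq_prod m k hk, qfac_eq_prod m (m - k) (by omega), qfac_eq_prod m m le_rfl,
    ← Finset.prod_mul_distrib] at key
  simp only [← pow_add] at key
  rw [key]
  -- now show the filtered product times P equals ∏ Φ^(m/d)
  have hfil : (Finset.Icc 1 m).filter (fun d => k / d + (m - k) / d < m / d)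
      = (Finset.Icc 2 m).filter (fun d => k / d + (m - k) / d < m / d) := by
    ext d
    simp only [Finset.mem_filter, Finset.mem_Icc]
    constructor
    · rintro ⟨⟨h1, h2⟩, hc⟩
      refine ⟨⟨?_, h2⟩, hc⟩
      rcases Nat.lt_or_ge d 2 with hd | hd
      · interval_cases d
        · simp only [Nat.div_one] at hc; omega
      · exact hd
    · rintro ⟨⟨h1, h2⟩, hc⟩
      exact ⟨⟨by omega, h2⟩, hc⟩
  rw [hfil, Finset.prod_filter, ← Finset.prod_mul_distrib]
  refine (Finset.prod_congr rfl fun d hd => ?_).symm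
  have hd2 : 2 ≤ d := (Finset.mem_Icc.mp hd).1
  have hd0 : 0 < d := by omega
  have hdiv : m / d = k / d + (m - k) / d + (if d ≤ k % d + (m - k) % d then 1 else 0) := by
    conv_lhs => rw [show m = k + (m - k) by omega]
    rw [Nat.add_div hd0]
  by_cases hle : d ≤ k % d + (m - k) % d
  · have hc : k / d + (m - k) / d < m / d := by rw [hdiv, if_pos hle]; omega
    rw [if_pos hc, hdiv, if_pos hle, pow_add, pow_add, pow_one]; ring
  · have hc : ¬ (k / d + (m - k) / d < m / d) := by rw [hdiv, if_neg hle]; omega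
    rw [if_neg hc, hdiv, if_neg hle, add_zero, pow_add, one_mul]
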